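/- arXiv:hep-th/0111255 — 5 statements merged into one kernel-verified Lean document; each statement's English description precedes it below -/
import Mathlib

section
/- Let R > 0, let P be a 2-dimensional linear subspace of ℝ^{d+1}, and let c ∈ ℝ^{d+1} satisfy ⟨c,p⟩ = 0 for all p ∈ P and ⟨c,c⟩ ≠ 1. Let x : ℝ → ℝ^{d+1} be twice differentiable with x(t) − Rc ∈ P, ⟨x(t),x(t)⟩ = R² and ⟨x′(t),x′(t)⟩ = 1 for all t ∈ ℝ (a planar trajectory on the AdS space of radius R, parametrized by proper time). Then the AdS acceleration vector γ(t) := x″(t) + R^{−2} x(t) satisfies ⟨γ(t),γ(t)⟩ = −⟨c,c⟩ / (R²(⟨c,c⟩ − 1)) for every t ∈ ℝ; in particular ⟨γ(t),γ(t)⟩ is constant, so the motion is uniformly accelerated. -/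
noncomputable section
open Matrix Complex

namespace AdS

/-- The metric signs: +1 for indices 0 and d, −1 otherwise. -/
def eta (d : ℕ) (μ : Fin (d+1)) : ℝ := if μ = 0 ∨ μ = Fin.last d then 1 else -1

/-- The AdS bilinear form on ℝ^{d+1}. -/
def formR (d : ℕ) (x y : Fin (d+1) → ℝ) : ℝ := ∑ μ, eta d μ * x μ * y μ

/-- The ℂ-bilinear extension of the AdS form to ℂ^{d+1}. -/
def formC (d : ℕ) (z w : Fin (d+1) → ℂ) : ℂ := ∑ μ, (eta d μ : ℂ) * z μ * w μ

/-- The real AdS quadric. -/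
def Xd (d : ℕ) : Set (Fin (d+1) → ℝ) := {x | formR d x x = 1}

/-- The complex AdS quadric. -/
def XdC (d : ℕ) : Set (Fin (d+1) → ℂ) := {z | formC d z z = 1}

/-- ℓ(a∧b) : x ↦ ⟨b,x⟩a − ⟨a,x⟩b as a matrix. -/
def ell (d : ℕ) (a b : Fin (d+1) → ℝ) : Matrix (Fin (d+1)) (Fin (d+1)) ℝ :=
  Matrix.of fun i j => eta d j * (b j * a i - a j * b i)

/-- The AdS group. -/
def Ggrp (d : ℕ) : Set (Matrix (Fin (d+1)) (Fin (d+1)) ℝ) :=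
  {Λ | ∀ x y, formR d (Λ.mulVec x) (Λ.mulVec y) = formR d x y}

/-- The connected component of the identity of the AdS group. -/
def G0 (d : ℕ) : Set (Matrix (Fin (d+1)) (Fin (d+1)) ℝ) :=
  connectedComponentIn (Ggrp d) 1

/-- The set C₁ of Lie algebra generators. -/
def C1 (d : ℕ) : Set (Matrix (Fin (d+1)) (Fin (d+1)) ℝ) :=
  {M | ∃ a b : Fin (d+1) → ℝ, formR d a a = 1 ∧ formR d b b = 1 ∧ formR d a b = 0 ∧
    0 < a 0 * b (Fin.last d) - a (Fin.last d) * b 0 ∧ M = ell d a b}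

/-- The cone C₊ generated by C₁. -/
def Cplus (d : ℕ) : Set (Matrix (Fin (d+1)) (Fin (d+1)) ℝ) :=
  {M | ∃ ρ : ℝ, 0 < ρ ∧ ∃ N ∈ C1 d, M = ρ • N}

/-- A real matrix viewed as a complex one. -/
def toC (d : ℕ) (M : Matrix (Fin (d+1)) (Fin (d+1)) ℝ) : Matrix (Fin (d+1)) (Fin (d+1)) ℂ :=
  M.map Complex.ofReal

/-- A real vector viewed as a complex one. -/
def toCv (d : ℕ) (x : Fin (d+1) → ℝ) : Fin (d+1) → ℂ := fun μ => (x μ : ℂ)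

/-- The generator M₀d = ℓ(e₀ ∧ e_d). -/
def M0d (d : ℕ) : Matrix (Fin (d+1)) (Fin (d+1)) ℝ :=
  ell d (Pi.single 0 1) (Pi.single (Fin.last d) 1)

/-- The future tuboid Z₁₊ of the complex AdS quadric. -/
def Z1plus (d : ℕ) : Set (Fin (d+1) → ℂ) :=
  {z | ∃ M ∈ C1 d, ∃ c ∈ Xd d, ∃ τ : ℂ, 0 < τ.im ∧
    z = (NormedSpace.exp (τ • toC d M)).mulVec (toCv d c)}

/-- The past tuboid Z₁₋ of the complex AdS quadric. -/
def Z1minus (d : ℕ) : Set (Fin (d+1) → ℂ) :=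
  {z | ∃ M ∈ C1 d, ∃ c ∈ Xd d, ∃ τ : ℂ, τ.im < 0 ∧
    z = (NormedSpace.exp (τ • toC d M)).mulVec (toCv d c)}
lemma formR_comm (d : ℕ) (x y : Fin (d+1) → ℝ) : formR d x y = formR d y x := by
  unfold formR; exact Finset.sum_congr rfl fun μ _ => by ring

lemma formR_add_left (d : ℕ) (x y z : Fin (d+1) → ℝ) :
    formR d (x + y) z = formR d x z + formR d y z := by
  unfold formR; rw [← Finset.sum_add_distrib]
  exact Finset.sum_congr rfl fun μ _ => by simp [Pi.add_apply]; ring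

lemma formR_smul_left (d : ℕ) (a : ℝ) (x z : Fin (d+1) → ℝ) :
    formR d (a • x) z = a * formR d x z := by
  unfold formR; rw [Finset.mul_sum]
  exact Finset.sum_congr rfl fun μ _ => by simp [Pi.smul_apply]; ring

lemma formR_sub_left (d : ℕ) (x y z : Fin (d+1) → ℝ) :
    formR d (x - y) z = formR d x z - formR d y z := by
  unfold formR; rw [← Finset.sum_sub_distrib]
  exact Finset.sum_congr rfl fun μ _ => by simp [Pi.sub_apply]; ring

lemma formR_add_right (d : ℕ) (x y z : Fin (d+1) → ℝ) :
    formR d z (x + y) = formR d z x + formR d z y := by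
  rw [formR_comm, formR_add_left, formR_comm d x z, formR_comm d y z]

lemma formR_smul_right (d : ℕ) (a : ℝ) (x z : Fin (d+1) → ℝ) :
    formR d z (a • x) = a * formR d z x := by
  rw [formR_comm, formR_smul_left, formR_comm]

lemma formR_sub_right (d : ℕ) (x y z : Fin (d+1) → ℝ) :
    formR d z (x - y) = formR d z x - formR d z y := by
  rw [formR_comm, formR_sub_left, formR_comm d x z, formR_comm d y z]

lemma formR_hasDerivAt {d : ℕ} {f g : ℝ → Fin (d+1) → ℝ} {f' g' : Fin (d+1) → ℝ} {t : ℝ}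
    (hf : HasDerivAt f f' t) (hg : HasDerivAt g g' t) :
    HasDerivAt (fun s => formR d (f s) (g s))
      (formR d f' (g t) + formR d (f t) g') t := by
  have hterm : ∀ μ : Fin (d+1), HasDerivAt (fun s => eta d μ * f s μ * g s μ)
      (eta d μ * f' μ * g t μ + eta d μ * f t μ * g' μ) t := by
    intro μ
    have hfμ : HasDerivAt (fun s => f s μ) (f' μ) t := by
      have h2 := (((ContinuousLinearMap.proj μ : (Fin (d+1) → ℝ) →L[ℝ] ℝ).hasFDerivAt.comp t
        hf.hasFDerivAt)).hasDerivAt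
      simpa [Function.comp_def] using h2
    have hgμ : HasDerivAt (fun s => g s μ) (g' μ) t := by
      have h2 := (((ContinuousLinearMap.proj μ : (Fin (d+1) → ℝ) →L[ℝ] ℝ).hasFDerivAt.comp t
        hg.hasFDerivAt)).hasDerivAt
      simpa [Function.comp_def] using h2
    exact ((hfμ.const_mul (eta d μ)).mul hgμ).congr_deriv (by ring)
  have := HasDerivAt.fun_sum (fun μ (_ : μ ∈ Finset.univ) => hterm μ)
  refine this.congr_deriv ?_
  unfold formR
  rw [← Finset.sum_add_distrib]

lemma deriv_mem_of_mem {E : Type*} [NormedAddCommGroup E] [NormedSpace ℝ E]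
    (P : Submodule ℝ E) (hP : IsClosed (P : Set E)) {f : ℝ → E} {f' : E} {t : ℝ}
    (hf : HasDerivAt f f' t) (hmem : ∀ s, f s ∈ P) : f' ∈ P := by
  have h := hasDerivAt_iff_tendsto_slope.mp hf
  refine hP.mem_of_tendsto h (Filter.Eventually.of_forall fun y => ?_)
  show slope f t y ∈ (P : Set E)
  simp only [slope, vsub_eq_sub]
  exact P.smul_mem _ (P.sub_mem (hmem y) (hmem t))

/-- planar trajectories on the AdS spacetime of radius `R` are uniformly
accelerated, with `⟨γ,γ⟩ = −⟨c,c⟩/(R²(⟨c,c⟩−1))`. -/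
theorem planar_trajectory_uniformly_accelerated
    (d : ℕ) (hd : 2 ≤ d) (R : ℝ) (hR : 0 < R)
    (P : Submodule ℝ (Fin (d+1) → ℝ)) (hP : Module.finrank ℝ P = 2)
    (c : Fin (d+1) → ℝ) (hcP : ∀ p ∈ P, formR d c p = 0) (hcc : formR d c c ≠ 1)
    (x : ℝ → (Fin (d+1) → ℝ))
    (hx1 : Differentiable ℝ x) (hx2 : Differentiable ℝ (deriv x))
    (hplane : ∀ t : ℝ, x t - R • c ∈ P)
    (hads : ∀ t : ℝ, formR d (x t) (x t) = R ^ 2)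
    (hproper : ∀ t : ℝ, formR d (deriv x t) (deriv x t) = 1) :
    ∀ t : ℝ,
      formR d (deriv (deriv x) t + (R ^ 2)⁻¹ • x t) (deriv (deriv x) t + (R ^ 2)⁻¹ • x t)
        = - formR d c c / (R ^ 2 * (formR d c c - 1)) := by
  intro t
  have hRne : R ≠ 0 := ne_of_gt hR
  have hPclosed : IsClosed (P : Set (Fin (d+1) → ℝ)) := P.closed_of_finiteDimensional
  set u : ℝ → Fin (d+1) → ℝ := fun s => x s - R • c with hu
  have humem : ∀ s, u s ∈ P := fun s => hplane s
  have hud : ∀ s, HasDerivAt u (deriv x s) s := fun s => ((hx1 s).hasDerivAt).sub_const _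
  have hx'mem : ∀ s, deriv x s ∈ P := fun s => deriv_mem_of_mem P hPclosed (hud s) humem
  have hx''mem : ∀ s, deriv (deriv x) s ∈ P :=
    fun s => deriv_mem_of_mem P hPclosed ((hx2 s).hasDerivAt) hx'mem
  set cc := formR d c c with hccdef
  have hccne : (1 : ℝ) - cc ≠ 0 := sub_ne_zero_of_ne (Ne.symm hcc)
  have hccne' : cc - 1 ≠ 0 := sub_ne_zero_of_ne hcc
  have hcu : formR d c (u t) = 0 := hcP _ (humem t)
  have hcx' : ∀ s, formR d c (deriv x s) = 0 := fun s => hcP _ (hx'mem s)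
  have hcx'' : formR d c (deriv (deriv x) t) = 0 := hcP _ (hx''mem t)
  have hcx : formR d c (x t) = R * cc := by
    have h0 : formR d c (x t - R • c) = 0 := hcu
    rw [formR_sub_right, formR_smul_right] at h0
    rw [← hccdef] at h0
    linarith
  have hxc : formR d (x t) c = R * cc := by rw [formR_comm]; exact hcx
  -- first-order identities
  have hxx' : ∀ s, formR d (x s) (deriv x s) = 0 := by
    intro s
    have hD := formR_hasDerivAt ((hx1 s).hasDerivAt) ((hx1 s).hasDerivAt)
    have hC : HasDerivAt (fun r => formR d (x r) (x r)) 0 s := by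
      have he : (fun r => formR d (x r) (x r)) = fun _ => R ^ 2 := funext hads
      rw [he]; exact hasDerivAt_const _ _
    have h0 := hD.unique hC
    have hsym := formR_comm d (deriv x s) (x s)
    linarith
  have hx'x'' : formR d (deriv x t) (deriv (deriv x) t) = 0 := by
    have hD := formR_hasDerivAt ((hx2 t).hasDerivAt) ((hx2 t).hasDerivAt)
    have hC : HasDerivAt (fun r => formR d (deriv x r) (deriv x r)) 0 t := by
      have he : (fun r => formR d (deriv x r) (deriv x r)) = fun _ => 1 := funext hproper
      rw [he]; exact hasDerivAt_const _ _
    have h0 := hD.unique hC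
    have hsym := formR_comm d (deriv (deriv x) t) (deriv x t)
    linarith
  have hxx'' : formR d (x t) (deriv (deriv x) t) = -1 := by
    have hD := formR_hasDerivAt ((hx1 t).hasDerivAt) ((hx2 t).hasDerivAt)
    have hC : HasDerivAt (fun r => formR d (x r) (deriv x r)) 0 t := by
      have he : (fun r => formR d (x r) (deriv x r)) = fun _ => 0 := funext hxx'
      rw [he]; exact hasDerivAt_const _ _
    have h0 := hD.unique hC
    have h1 := hproper t
    linarith
  -- the norm of u
  have hK : formR d (u t) (u t) = R ^ 2 * (1 - cc) := by
    show formR d (x t - R • c) (x t - R • c) = _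
    simp only [formR_sub_left, formR_sub_right, formR_smul_left, formR_smul_right]
    rw [hads t, hxc, hcx, ← hccdef]
    ring
  have hKne : formR d (u t) (u t) ≠ 0 := by
    rw [hK]; exact mul_ne_zero (pow_ne_zero 2 hRne) hccne
  have hux' : formR d (u t) (deriv x t) = 0 := by
    show formR d (x t - R • c) (deriv x t) = 0
    rw [formR_sub_left, formR_smul_left, hxx' t, hcx' t]
    ring
  have hx'u : formR d (deriv x t) (u t) = 0 := by rw [formR_comm]; exact hux'
  -- u t and x' t form a basis of P
  have hindep : LinearIndependent ℝ ![u t, deriv x t] := by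
    rw [LinearIndependent.pair_iff]
    intro s r hsr
    have h1 : formR d (s • u t + r • deriv x t) (u t) = 0 := by rw [hsr]; simp [formR]
    have h2 : formR d (s • u t + r • deriv x t) (deriv x t) = 0 := by rw [hsr]; simp [formR]
    rw [formR_add_left, formR_smul_left, formR_smul_left, hx'u] at h1
    rw [formR_add_left, formR_smul_left, formR_smul_left, hux', hproper t] at h2
    have hs : s = 0 := by
      have : s * formR d (u t) (u t) = 0 := by linarith
      exact (mul_eq_zero.mp this).resolve_right hKne
    refine ⟨hs, ?_⟩
    rw [hs] at h2; simpa using h2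
  have hspan : Submodule.span ℝ ({u t, deriv x t} : Set (Fin (d+1) → ℝ)) = P := by
    apply Submodule.eq_of_le_of_finrank_le
    · rw [Submodule.span_le]
      rintro v (rfl | rfl)
      · exact humem t
      · exact hx'mem t
    · rw [hP]
      have hr : ({u t, deriv x t} : Set (Fin (d+1) → ℝ)) = Set.range ![u t, deriv x t] := by
        simp only [Matrix.range_cons, Matrix.range_empty, Set.union_empty,
          Set.union_singleton, Set.range_unique]
        exact Set.pair_comm _ _
      rw [hr, finrank_span_eq_card hindep]
      simp
  have hx''span : deriv (deriv x) t ∈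
      Submodule.span ℝ ({u t, deriv x t} : Set (Fin (d+1) → ℝ)) := by
    rw [hspan]; exact hx''mem t
  obtain ⟨α, β, hαβ⟩ := Submodule.mem_span_pair.mp hx''span
  -- compute β = 0
  have hb : β = 0 := by
    have h2 : formR d (α • u t + β • deriv x t) (deriv x t)
        = formR d (deriv (deriv x) t) (deriv x t) := by rw [hαβ]
    rw [formR_add_left, formR_smul_left, formR_smul_left, hux', hproper t,
      formR_comm d (deriv (deriv x) t) (deriv x t), hx'x''] at h2
    linarith
  -- compute α
  have ha : α * (R ^ 2 * (1 - cc)) = -1 := by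
    have h1 : formR d (α • u t + β • deriv x t) (u t)
        = formR d (deriv (deriv x) t) (u t) := by rw [hαβ]
    have hrhs : formR d (deriv (deriv x) t) (u t) = -1 := by
      show formR d (deriv (deriv x) t) (x t - R • c) = -1
      rw [formR_sub_right, formR_smul_right, formR_comm d (deriv (deriv x) t) (x t),
        formR_comm d (deriv (deriv x) t) c, hxx'', hcx'']
      ring
    rw [formR_add_left, formR_smul_left, formR_smul_left, hx'u, hK, hrhs] at h1
    linarith
  have hα : α = -1 / (R ^ 2 * (1 - cc)) := by
    field_simp at ha ⊢
    linarith
  -- the acceleration vector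
  have hγ : deriv (deriv x) t + (R ^ 2)⁻¹ • x t
      = (α + (R ^ 2)⁻¹) • x t + (-(α * R)) • c := by
    rw [← hαβ, hb]
    show α • (x t - R • c) + (0:ℝ) • deriv x t + (R ^ 2)⁻¹ • x t = _
    ext μ
    simp [Pi.add_apply, Pi.sub_apply, Pi.smul_apply, smul_eq_mul]
    ring
  rw [hγ]
  simp only [formR_add_left, formR_add_right, formR_smul_left, formR_smul_right]
  rw [hads t, hxc, hcx, ← hccdef, hα]
  field_simp
  ring

end AdS
end
end

section
/- Fix R > 0, real numbers x¹, …, x^{d−2} and v, and set σ = (R² + Σ_{i=1}^{d−2}(xⁱ)²)^{1/2}. Define x : ℝ → ℝ^{d+1} by x⁰(t) = t, xⁱ(t) = xⁱ for 1 ≤ i ≤ d−2, x^{d−1}(t) = σ sinh v + t²/(2σe^{v}), and x^d(t) = σ cosh v − t²/(2σe^{v}) (a parabolic trajectory). Then for all t ∈ ℝ: ⟨x(t),x(t)⟩ = R², ⟨x′(t),x′(t)⟩ = 1 (t is the proper time), and the AdS acceleration vector γ(t) := x″(t) + R^{−2}x(t) satisfies ⟨γ(t),γ(t)⟩ = −1/R²;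 i.e. parabolic trajectories are uniformly accelerated with acceleration exactly 1/R. -/
noncomputable section
open Matrix Complex

namespace AdS

lemma sum_split (d : ℕ) (hd : 2 ≤ d) (F : Fin (d+1) → ℝ) :
    ∑ μ, F μ = F 0 + F ⟨d-1, by omega⟩ + F (Fin.last d)
      + ∑ μ : Fin (d+1), if 1 ≤ μ.1 ∧ μ.1 ≤ d-2 then F μ else 0 := by
  have key : ∀ μ : Fin (d+1), F μ =
      (if μ = 0 then F μ else 0) + (if μ = (⟨d-1, by omega⟩ : Fin (d+1)) then F μ else 0)
      + (if μ = Fin.last d then F μ else 0)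
      + (if 1 ≤ μ.1 ∧ μ.1 ≤ d-2 then F μ else 0) := by
    intro μ
    have hμ : μ.1 < d + 1 := μ.2
    simp only [Fin.ext_iff, Fin.val_zero, Fin.val_last]
    split_ifs <;> first | (exfalso; omega) | ring
  rw [Finset.sum_congr rfl (fun μ _ => key μ)]
  rw [Finset.sum_add_distrib, Finset.sum_add_distrib, Finset.sum_add_distrib]
  simp [Finset.sum_ite_eq']

lemma formR_eval (d : ℕ) (hd : 2 ≤ d) (xv : Fin (d+1) → ℝ)
    (a0 a1 a2 b0 b1 b2 ca cb : ℝ) (a b : Fin (d+1) → ℝ)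
    (ha : ∀ μ : Fin (d+1), a μ = if μ = 0 then a0
      else if μ.1 = d - 1 then a1 else if μ = Fin.last d then a2 else ca * xv μ)
    (hb : ∀ μ : Fin (d+1), b μ = if μ = 0 then b0
      else if μ.1 = d - 1 then b1 else if μ = Fin.last d then b2 else cb * xv μ) :
    formR d a b = a0*b0 - a1*b1 + a2*b2
      - ca*cb*(∑ i : Fin (d+1), if 1 ≤ i.1 ∧ i.1 ≤ d-2 then (xv i) ^ 2 else 0) := by
  have h0ne : ((⟨d-1, by omega⟩ : Fin (d+1)) : Fin (d+1)) ≠ 0 := by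
    simp [Fin.ext_iff]; omega
  have hlne0 : (Fin.last d) ≠ 0 := by simp [Fin.ext_iff]; omega
  have hlned : (Fin.last d).1 ≠ d - 1 := by simp [Fin.last]; omega
  unfold formR
  rw [sum_split d hd]
  have e0 : eta d 0 = 1 := by simp [eta]
  have ed : eta d (⟨d-1, by omega⟩ : Fin (d+1)) = -1 := by
    have hne : ¬((⟨d-1, by omega⟩ : Fin (d+1)) = 0 ∨ (⟨d-1, by omega⟩ : Fin (d+1)) = Fin.last d) := by
      push_neg
      refine ⟨h0ne, fun hcontra => ?_⟩
      have := congrArg Fin.val hcontra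
      simp only [Fin.val_last] at this
      omega
    unfold eta
    rw [if_neg hne]
  have el : eta d (Fin.last d) = 1 := by simp [eta]
  have hmid : ∀ μ : Fin (d+1),
      (if 1 ≤ μ.1 ∧ μ.1 ≤ d-2 then eta d μ * a μ * b μ else 0)
      = -(ca*cb) * (if 1 ≤ μ.1 ∧ μ.1 ≤ d-2 then (xv μ) ^ 2 else 0) := by
    intro μ
    split_ifs with h
    · have hne0 : μ ≠ 0 := by rw [Ne, Fin.ext_iff, Fin.val_zero]; omega
      have hned : μ.1 ≠ d - 1 := by omega
      have hnel : μ ≠ Fin.last d := by simp [Fin.ext_iff, Fin.last]; omega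
      have heta : eta d μ = -1 := by simp [eta, hne0, hnel]
      rw [ha, hb, heta]
      simp only [if_neg hne0, if_neg hned, if_neg hnel]
      ring
    · ring
  rw [Finset.sum_congr rfl (fun μ _ => hmid μ), ← Finset.mul_sum]
  have hd1 : ((⟨d-1, by omega⟩ : Fin (d+1)) : Fin (d+1)).1 = d - 1 := rfl
  have ha0 : a 0 = a0 := by rw [ha]; rw [if_pos rfl]
  have hb0 : b 0 = b0 := by rw [hb]; rw [if_pos rfl]
  have had : a ⟨d-1, by omega⟩ = a1 := by rw [ha]; rw [if_neg h0ne, if_pos hd1]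
  have hbd : b ⟨d-1, by omega⟩ = b1 := by rw [hb]; rw [if_neg h0ne, if_pos hd1]
  have hal : a (Fin.last d) = a2 := by rw [ha]; rw [if_neg hlne0, if_neg hlned, if_pos rfl]
  have hbl : b (Fin.last d) = b2 := by rw [hb]; rw [if_neg hlne0, if_neg hlned, if_pos rfl]
  rw [ha0, hb0, had, hbd, hal, hbl, e0, ed, el]
  ring

/-- parabolic trajectories lie on the AdS spacetime of radius `R`, are
parametrized by proper time, and are uniformly accelerated with `⟨γ,γ⟩ = −1/R²`. -/
theorem parabolic_trajectory_uniformly_accelerated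
    (d : ℕ) (hd : 2 ≤ d) (R : ℝ) (hR : 0 < R)
    (xv : Fin (d+1) → ℝ) (v : ℝ)
    (σ : ℝ)
    (hσ : σ = Real.sqrt (R ^ 2 + ∑ i : Fin (d+1),
      if 1 ≤ i.1 ∧ i.1 ≤ d - 2 then (xv i) ^ 2 else 0))
    (x : ℝ → (Fin (d+1) → ℝ))
    (hx : ∀ t : ℝ, ∀ μ : Fin (d+1),
      x t μ = if μ = 0 then t
        else if μ.1 = d - 1 then σ * Real.sinh v + t ^ 2 / (2 * σ * Real.exp v)
        else if μ = Fin.last d then σ * Real.cosh v - t ^ 2 / (2 * σ * Real.exp v)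
        else xv μ) :
    ∀ t : ℝ,
      formR d (x t) (x t) = R ^ 2 ∧
      formR d (deriv x t) (deriv x t) = 1 ∧
      formR d (deriv (deriv x) t + (R ^ 2)⁻¹ • x t)
        (deriv (deriv x) t + (R ^ 2)⁻¹ • x t) = - (1 / R ^ 2) := by
  have hSnn : (0:ℝ) ≤ ∑ i : Fin (d+1), if 1 ≤ i.1 ∧ i.1 ≤ d - 2 then (xv i) ^ 2 else 0 :=
    Finset.sum_nonneg fun i _ => by positivity
  set S : ℝ := ∑ i : Fin (d+1), if 1 ≤ i.1 ∧ i.1 ≤ d - 2 then (xv i) ^ 2 else 0 with hS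
  have hApos : (0:ℝ) < R ^ 2 + S := by positivity
  have hσpos : 0 < σ := by rw [hσ]; exact Real.sqrt_pos.mpr hApos
  have hσ2 : σ ^ 2 = R ^ 2 + S := by
    rw [hσ, Real.sq_sqrt hApos.le]
  have hEpos : (0:ℝ) < Real.exp v := Real.exp_pos v
  have hq : 2 * σ * Real.exp v ≠ 0 := by positivity
  have hRne : R ≠ 0 := ne_of_gt hR
  -- first derivative
  have hder1 : ∀ t : ℝ, HasDerivAt x
      (fun μ => if μ = 0 then (1:ℝ)
        else if μ.1 = d - 1 then 2 * t / (2 * σ * Real.exp v)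
        else if μ = Fin.last d then -(2 * t / (2 * σ * Real.exp v)) else 0) t := by
    intro t
    rw [hasDerivAt_pi]
    intro μ
    have hfun : (fun s => x s μ) = fun s => if μ = 0 then s
        else if μ.1 = d - 1 then σ * Real.sinh v + s ^ 2 / (2 * σ * Real.exp v)
        else if μ = Fin.last d then σ * Real.cosh v - s ^ 2 / (2 * σ * Real.exp v)
        else xv μ := funext fun s => hx s μ
    rw [hfun]
    by_cases h0 : μ = 0
    · simp only [if_pos h0]; exact hasDerivAt_id t
    by_cases h1 : μ.1 = d - 1
    · simp only [if_neg h0, if_pos h1]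
      have h := ((hasDerivAt_pow 2 t).div_const (2 * σ * Real.exp v)).const_add
        (σ * Real.sinh v)
      convert h using 1
      push_cast
      ring
    by_cases h2 : μ = Fin.last d
    · simp only [if_neg h0, if_neg h1, if_pos h2]
      have h := HasDerivAt.const_sub (σ * Real.cosh v)
        ((hasDerivAt_pow 2 t).div_const (2 * σ * Real.exp v))
      convert h using 1
      push_cast
      ring
    · simp only [if_neg h0, if_neg h1, if_neg h2]
      exact hasDerivAt_const t _
  have hdx : deriv x = fun t => (fun μ => if μ = 0 then (1:ℝ)
        else if μ.1 = d - 1 then 2 * t / (2 * σ * Real.exp v)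
        else if μ = Fin.last d then -(2 * t / (2 * σ * Real.exp v)) else 0) :=
    funext fun t => (hder1 t).deriv
  -- second derivative
  have hder2 : ∀ t : ℝ, HasDerivAt (deriv x)
      (fun μ => if μ = 0 then (0:ℝ)
        else if μ.1 = d - 1 then 2 / (2 * σ * Real.exp v)
        else if μ = Fin.last d then -(2 / (2 * σ * Real.exp v)) else 0) t := by
    intro t
    rw [hdx, hasDerivAt_pi]
    intro μ
    by_cases h0 : μ = 0
    · simp only [if_pos h0]; exact hasDerivAt_const t _
    by_cases h1 : μ.1 = d - 1
    · simp only [if_neg h0, if_pos h1]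
      have h := ((hasDerivAt_id t).const_mul (2:ℝ)).div_const (2 * σ * Real.exp v)
      exact h.congr_deriv (by norm_num)
    by_cases h2 : μ = Fin.last d
    · simp only [if_neg h0, if_neg h1, if_pos h2]
      have h := (((hasDerivAt_id t).const_mul (2:ℝ)).div_const (2 * σ * Real.exp v)).fun_neg
      convert h using 1 <;> norm_num
    · simp only [if_neg h0, if_neg h1, if_neg h2]
      exact hasDerivAt_const t _
  have hddx : ∀ t : ℝ, deriv (deriv x) t = fun μ => if μ = 0 then (0:ℝ)
        else if μ.1 = d - 1 then 2 / (2 * σ * Real.exp v)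
        else if μ = Fin.last d then -(2 / (2 * σ * Real.exp v)) else 0 :=
    fun t => (hder2 t).deriv
  -- algebraic identities
  have h1 := Real.cosh_sq_sub_sinh_sq v
  have h2 := Real.sinh_add_cosh v
  intro t
  have h3 : t ^ 2 / (2 * σ * Real.exp v) * (2 * σ * Real.exp v) = t ^ 2 :=
    div_mul_cancel₀ _ hq
  have key : (σ * Real.cosh v - t ^ 2 / (2 * σ * Real.exp v)) ^ 2
      - (σ * Real.sinh v + t ^ 2 / (2 * σ * Real.exp v)) ^ 2 = σ ^ 2 - t ^ 2 := by
    linear_combination σ ^ 2 * h1 - 2 * σ * (t ^ 2 / (2 * σ * Real.exp v)) * h2 - h3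
  refine ⟨?_, ?_, ?_⟩
  · rw [formR_eval d hd xv t (σ * Real.sinh v + t ^ 2 / (2 * σ * Real.exp v))
      (σ * Real.cosh v - t ^ 2 / (2 * σ * Real.exp v)) t
      (σ * Real.sinh v + t ^ 2 / (2 * σ * Real.exp v))
      (σ * Real.cosh v - t ^ 2 / (2 * σ * Real.exp v)) 1 1 (x t) (x t)
      (fun μ => by rw [hx t μ]; split_ifs <;> ring)
      (fun μ => by rw [hx t μ]; split_ifs <;> ring)]
    rw [← hS]
    linear_combination key + hσ2
  · rw [formR_eval d hd xv 1 (2 * t / (2 * σ * Real.exp v))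
      (-(2 * t / (2 * σ * Real.exp v))) 1 (2 * t / (2 * σ * Real.exp v))
      (-(2 * t / (2 * σ * Real.exp v))) 0 0 (deriv x t) (deriv x t)
      (fun μ => by simp only [hdx]; split_ifs <;> ring)
      (fun μ => by simp only [hdx]; split_ifs <;> ring)]
    ring
  · have h4 : 2 / (2 * σ * Real.exp v) * (σ * Real.exp v) = 1 := by
      rw [div_mul_eq_mul_div, div_eq_iff hq]
      ring
    have hP : (R ^ 2)⁻¹ * R ^ 2 = 1 := inv_mul_cancel₀ (by positivity)
    set P : ℝ := (R ^ 2)⁻¹ with hPdef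
    set u : ℝ := 2 / (2 * σ * Real.exp v) with hu
    have hγ : ∀ μ : Fin (d+1), (deriv (deriv x) t + P • x t) μ =
        if μ = 0 then P * t
        else if μ.1 = d - 1 then u + P * (σ * Real.sinh v + t ^ 2 / (2 * σ * Real.exp v))
        else if μ = Fin.last d then -u + P * (σ * Real.cosh v - t ^ 2 / (2 * σ * Real.exp v))
        else P * xv μ := by
      intro μ
      simp only [Pi.add_apply, Pi.smul_apply, smul_eq_mul, hddx t, hx t μ]
      split_ifs <;> ring
    rw [formR_eval d hd xv (P * t)
      (u + P * (σ * Real.sinh v + t ^ 2 / (2 * σ * Real.exp v)))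
      (-u + P * (σ * Real.cosh v - t ^ 2 / (2 * σ * Real.exp v)))
      (P * t)
      (u + P * (σ * Real.sinh v + t ^ 2 / (2 * σ * Real.exp v)))
      (-u + P * (σ * Real.cosh v - t ^ 2 / (2 * σ * Real.exp v)))
      P P _ _ hγ hγ]
    rw [← hS]
    have hRinv : -(1 / R ^ 2) = -P := by rw [hPdef]; ring
    rw [hRinv]
    linear_combination P ^ 2 * key - 2 * u * P * σ * h2 - 2 * P * h4 + P ^ 2 * hσ2 + P * hP

end AdS
end
end

section
/- Let z ∈ ℂ^{d+1} have the form z = (i y⁰, x¹, …, x^d) with y⁰, x¹, …, x^d real, x^d > 0, and ⟨z,z⟩ = 1 (i.e. z lies in the 'Euclidean' AdS space X_d^{(ℰ)}). Then: if y⁰ = 0, z ∈ X_d; if y⁰ > 0, z ∈ Z_{1+}; if y⁰ < 0, z ∈ Z_{1−}. In particular X_d^{(ℰ)} ⊂ X_d ∪ Z_{1+} ∪ Z_{1−}. -/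
noncomputable section
open Matrix Complex

namespace AdS

-- AUX START
def Am (d : ℕ) : Matrix (Fin (d+1)) (Fin (d+1)) ℂ :=
  Matrix.single 0 (Fin.last d) 1 - Matrix.single (Fin.last d) 0 1

def Pm (d : ℕ) : Matrix (Fin (d+1)) (Fin (d+1)) ℂ :=
  Matrix.single 0 0 1 + Matrix.single (Fin.last d) (Fin.last d) 1

variable {d : ℕ}

lemma hPP (h0 : (0 : Fin (d+1)) ≠ Fin.last d) : Pm d * Pm d = Pm d := by
  simp [Pm, add_mul, mul_add, h0, h0.symm]

lemma hPA (h0 : (0 : Fin (d+1)) ≠ Fin.last d) : Pm d * Am d = Am d := by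
  simp [Pm, Am, add_mul, mul_add, mul_sub, h0, h0.symm]
  try abel

lemma hAP (h0 : (0 : Fin (d+1)) ≠ Fin.last d) : Am d * Pm d = Am d := by
  simp [Pm, Am, add_mul, mul_add, sub_mul, h0, h0.symm]
  try abel

lemma hAA (h0 : (0 : Fin (d+1)) ≠ Fin.last d) : Am d * Am d = -Pm d := by
  simp [Pm, Am, sub_mul, mul_sub, h0, h0.symm]
  abel

/-- The ring hom from `ℂ³` onto the commutative subalgebra spanned by `1, Pm, Am`. -/
def phiHom (d : ℕ) (h0 : (0 : Fin (d+1)) ≠ Fin.last d) :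
    (Fin 3 → ℂ) →+* Matrix (Fin (d+1)) (Fin (d+1)) ℂ where
  toFun f := f 0 • 1 + ((f 1 + f 2)/2 - f 0) • Pm d
      + (Complex.I * (f 1 - f 2)/2) • Am d
  map_one' := by
    simp only [Pi.one_apply]
    norm_num
  map_mul' f g := by
    simp only [Pi.mul_apply]
    rw [add_mul, add_mul, mul_add, mul_add, mul_add, mul_add, mul_add, mul_add]
    rw [smul_mul_smul_comm, smul_mul_smul_comm, smul_mul_smul_comm, smul_mul_smul_comm,
      smul_mul_smul_comm, smul_mul_smul_comm, smul_mul_smul_comm, smul_mul_smul_comm,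
      smul_mul_smul_comm]
    rw [hPP h0, hPA h0, hAP h0, hAA h0]
    simp only [one_mul, mul_one]
    match_scalars
    · ring
    · linear_combination ((f 1 - f 2) * (g 1 - g 2) / 4) * Complex.I_sq
    · ring
  map_zero' := by norm_num
  map_add' f g := by
    simp only [Pi.add_apply]
    match_scalars <;> ring

lemma phiHom_cont (h0 : (0 : Fin (d+1)) ≠ Fin.last d) : Continuous (phiHom d h0) := by
  unfold phiHom
  simp only [RingHom.coe_mk, MonoidHom.coe_mk, OneHom.coe_mk]
  fun_prop

lemma exp_smul_Am (h0 : (0 : Fin (d+1)) ≠ Fin.last d) (τ : ℂ) :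
    NormedSpace.exp (τ • Am d) =
      1 + ((Complex.exp (-(Complex.I*τ)) + Complex.exp (Complex.I*τ))/2 - 1) • Pm d
        + (Complex.I * (Complex.exp (-(Complex.I*τ)) - Complex.exp (Complex.I*τ))/2) • Am d := by
  have hv : τ • Am d = phiHom d h0 ![0, -(Complex.I*τ), Complex.I*τ] := by
    show τ • Am d = _ • (1 : Matrix (Fin (d+1)) (Fin (d+1)) ℂ) + _ • Pm d + _ • Am d
    simp only [Matrix.cons_val_zero, Matrix.cons_val_one, Matrix.head_cons]
    have h2 : (![0, -(Complex.I*τ), Complex.I*τ] : Fin 3 → ℂ) 2 = Complex.I*τ := rfl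
    rw [h2]
    match_scalars
    · linear_combination τ * Complex.I_sq
    · ring
    · ring
  letI : SeminormedRing (Matrix (Fin (d+1)) (Fin (d+1)) ℂ) := Matrix.linftyOpSemiNormedRing
  letI : NormedRing (Matrix (Fin (d+1)) (Fin (d+1)) ℂ) := Matrix.linftyOpNormedRing
  letI : NormedAlgebra ℂ (Matrix (Fin (d+1)) (Fin (d+1)) ℂ) := Matrix.linftyOpNormedAlgebra
  rw [hv]; erw [← NormedSpace.map_exp (phiHom d h0) (phiHom_cont h0)]
  have hexp : NormedSpace.exp (![0, -(Complex.I*τ), Complex.I*τ] : Fin 3 → ℂ)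
      = ![1, Complex.exp (-(Complex.I*τ)), Complex.exp (Complex.I*τ)] := by
    funext i
    rw [Pi.coe_exp]
    fin_cases i
    · simp [NormedSpace.exp_zero]
    · simp [Complex.exp_eq_exp_ℂ]
    · simp [Complex.exp_eq_exp_ℂ]
  rw [hexp]
  show _ • (1 : Matrix (Fin (d+1)) (Fin (d+1)) ℂ) + _ • Pm d + _ • Am d = _
  have h2 : (![(1:ℂ), Complex.exp (-(Complex.I*τ)), Complex.exp (Complex.I*τ)] : Fin 3 → ℂ) 2
      = Complex.exp (Complex.I*τ) := rfl
  simp only [Matrix.cons_val_zero, Matrix.cons_val_one, Matrix.head_cons, h2, one_smul]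

lemma exp_I_smul_Am (h0 : (0 : Fin (d+1)) ≠ Fin.last d) (t : ℝ) :
    NormedSpace.exp ((Complex.I * t) • Am d) =
      1 + ((Real.cosh t : ℂ) - 1) • Pm d + (Complex.I * (Real.sinh t : ℂ)) • Am d := by
  rw [exp_smul_Am h0]
  have h1 : -(Complex.I * (Complex.I * (t:ℂ))) = (t:ℂ) := by
    linear_combination (-(t:ℂ)) * Complex.I_mul_I
  have h2 : Complex.I * (Complex.I * (t:ℂ)) = -(t:ℂ) := by
    linear_combination (t:ℂ) * Complex.I_mul_I
  rw [h1, h2]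
  have e1 : (Complex.exp (t:ℂ) + Complex.exp (-(t:ℂ)))/2 - 1 = ((Real.cosh t : ℂ) - 1) := by
    rw [Real.cosh_eq]; push_cast; ring
  have e2 : Complex.I * (Complex.exp (t:ℂ) - Complex.exp (-(t:ℂ)))/2
      = Complex.I * (Real.sinh t : ℂ) := by
    rw [Real.sinh_eq]; push_cast; ring
  rw [e1, e2]

lemma sbm_mulVec {n : ℕ} (i j : Fin n) (a : ℂ) (v : Fin n → ℂ) (k : Fin n) :
    ((Matrix.single i j a).mulVec v) k = if i = k then a * v j else 0 := by
  by_cases h : i = k <;>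
    simp [Matrix.mulVec, dotProduct, Matrix.single, h, ite_and]

lemma toC_M0d (h0 : (0 : Fin (d+1)) ≠ Fin.last d) : toC d (M0d d) = Am d := by
  ext i j
  by_cases hj0 : j = 0 <;> by_cases hjl : j = Fin.last d <;>
    by_cases hi0 : i = 0 <;> by_cases hil : i = Fin.last d <;>
    simp_all [toC, M0d, ell, Am, Matrix.single, Pi.single_apply, eta, h0.symm, eq_comm]

lemma M0d_mem_C1 (h0 : (0 : Fin (d+1)) ≠ Fin.last d) : M0d d ∈ C1 d := by
  refine ⟨Pi.single 0 1, Pi.single (Fin.last d) 1, ?_, ?_, ?_, ?_, rfl⟩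
  · simp [formR, Pi.single_apply, eta]
  · simp [formR, Pi.single_apply, eta]
  · simp [formR, Pi.single_apply, h0, h0.symm]
  · simp [Pi.single_apply, h0, h0.symm]

/-- the "Euclidean" AdS spacetime is contained in `X_d ∪ Z₁₊ ∪ Z₁₋`:
a point `z = (iy⁰, x¹, …, x^d)` of `X_d^{(c)}` with `x^d > 0` lies in `X_d` if `y⁰ = 0`,
in `Z₁₊` if `y⁰ > 0`, and in `Z₁₋` if `y⁰ < 0`. -/
theorem euclidean_AdS_in_tuboids
    (d : ℕ) (hd : 2 ≤ d) (y0 : ℝ) (xv : Fin (d+1) → ℝ)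
    (z : Fin (d+1) → ℂ)
    (hz : ∀ μ : Fin (d+1), z μ = if μ = 0 then Complex.I * (y0 : ℂ) else (xv μ : ℂ))
    (hxd : 0 < xv (Fin.last d))
    (hquad : formC d z z = 1) :
    (y0 = 0 → ∃ x ∈ Xd d, z = toCv d x) ∧
    (0 < y0 → z ∈ Z1plus d) ∧
    (y0 < 0 → z ∈ Z1minus d) := by
  have h0 : (0 : Fin (d+1)) ≠ Fin.last d := by
    rw [Fin.ne_iff_vne]
    show (0 : ℕ) ≠ d
    omega
  have hz0 : z 0 = Complex.I * (y0 : ℂ) := by rw [hz]; simp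
  have hzne : ∀ μ : Fin (d+1), μ ≠ 0 → z μ = (xv μ : ℂ) := fun μ hμ => by
    rw [hz]; simp [hμ]
  set S : ℝ := ∑ μ ∈ Finset.univ.erase 0, eta d μ * xv μ * xv μ with hS_def
  have hquadR : -y0^2 + S = 1 := by
    have h1 : formC d z z
        = (eta d 0 : ℂ) * z 0 * z 0
          + ∑ μ ∈ Finset.univ.erase 0, (eta d μ : ℂ) * z μ * z μ :=
      (Finset.add_sum_erase _ _ (Finset.mem_univ 0)).symm
    have h2 : ∑ μ ∈ Finset.univ.erase 0, (eta d μ : ℂ) * z μ * z μ = (S : ℂ) := by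
      rw [hS_def, Complex.ofReal_sum]
      refine Finset.sum_congr rfl fun μ hμ => ?_
      rw [hzne μ (Finset.ne_of_mem_erase hμ)]
      push_cast; ring
    have h3 : (eta d 0 : ℂ) = 1 := by norm_num [eta]
    rw [h1, h2, h3, hz0] at hquad
    have h4 : ((-y0^2 + S : ℝ) : ℂ) = 1 := by
      rw [← hquad]; push_cast
      linear_combination (-(y0:ℂ)^2) * Complex.I_sq
    exact_mod_cast h4
  have hlmem : Fin.last d ∈ Finset.univ.erase (0 : Fin (d+1)) :=
    Finset.mem_erase.2 ⟨h0.symm, Finset.mem_univ _⟩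
  set T : ℝ := ∑ μ ∈ (Finset.univ.erase 0).erase (Fin.last d), eta d μ * xv μ * xv μ
    with hT_def
  have hetal : eta d (Fin.last d) = 1 := by simp [eta]
  have hST : S = xv (Fin.last d) * xv (Fin.last d) + T := by
    rw [hS_def, hT_def, ← Finset.add_sum_erase _ _ hlmem, hetal]
    ring
  have hT0 : T ≤ 0 := by
    rw [hT_def]
    apply Finset.sum_nonpos
    intro μ hμ
    have h1 : μ ≠ Fin.last d := Finset.ne_of_mem_erase hμ
    have h2 : μ ≠ 0 := Finset.ne_of_mem_erase (Finset.mem_of_mem_erase hμ)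
    have h3 : eta d μ = -1 := by simp [eta, h1, h2]
    rw [h3]
    nlinarith [sq_nonneg (xv μ)]
  have hkey : xv (Fin.last d) * xv (Fin.last d) - y0^2 = 1 - T := by linarith
  have hpos : 0 < xv (Fin.last d) * xv (Fin.last d) - y0^2 := by linarith
  set r : ℝ := Real.sqrt (xv (Fin.last d) * xv (Fin.last d) - y0 ^ 2) with hr_def
  have hr2 : r * r = xv (Fin.last d) * xv (Fin.last d) - y0^2 :=
    Real.mul_self_sqrt (le_of_lt hpos)
  have hrpos : 0 < r := Real.sqrt_pos.2 hpos
  set c : Fin (d+1) → ℝ :=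
    fun μ => if μ = 0 then 0 else if μ = Fin.last d then r else xv μ with hc_def
  have hc0 : c 0 = 0 := by simp [hc_def]
  have hcl : c (Fin.last d) = r := by simp [hc_def, h0.symm]
  have hcmid : ∀ μ : Fin (d+1), μ ≠ 0 → μ ≠ Fin.last d → c μ = xv μ := by
    intro μ h1 h2; simp [hc_def, h1, h2]
  have hcmem : c ∈ Xd d := by
    show formR d c c = 1
    have h1 : formR d c c = eta d 0 * c 0 * c 0
        + ∑ μ ∈ Finset.univ.erase 0, eta d μ * c μ * c μ :=
      (Finset.add_sum_erase _ _ (Finset.mem_univ 0)).symm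
    have h2 : ∑ μ ∈ Finset.univ.erase 0, eta d μ * c μ * c μ
        = eta d (Fin.last d) * c (Fin.last d) * c (Fin.last d)
          + ∑ μ ∈ (Finset.univ.erase 0).erase (Fin.last d), eta d μ * c μ * c μ :=
      (Finset.add_sum_erase _ _ hlmem).symm
    have h3 : ∑ μ ∈ (Finset.univ.erase 0).erase (Fin.last d), eta d μ * c μ * c μ = T := by
      rw [hT_def]
      refine Finset.sum_congr rfl fun μ hμ => ?_
      rw [hcmid μ (Finset.ne_of_mem_erase (Finset.mem_of_mem_erase hμ))
        (Finset.ne_of_mem_erase hμ)]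
    rw [h1, h2, h3, hc0, hcl, hetal]
    nlinarith [hr2, hkey]
  -- the key formula, valid for the specific t built from y0
  set t : ℝ := Real.arsinh (y0 / r) with ht_def
  have hsinh : Real.sinh t * r = y0 := by
    rw [ht_def, Real.sinh_arsinh]
    field_simp
  have hcosh : Real.cosh t * r = xv (Fin.last d) := by
    rw [ht_def, Real.cosh_arsinh]
    have h1 : 1 + (y0/r)^2 = (xv (Fin.last d) / r)^2 := by
      field_simp
      nlinarith [hr2]
    rw [h1, Real.sqrt_sq (div_nonneg hxd.le hrpos.le)]
    field_simp
  have hmain : z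
      = (NormedSpace.exp ((Complex.I * (t:ℂ)) • toC d (M0d d))).mulVec (toCv d c) := by
    rw [toC_M0d h0, exp_I_smul_Am h0]
    have hPv : ∀ k, ((Pm d).mulVec (toCv d c)) k
        = (if (0 : Fin (d+1)) = k then ((c 0 : ℝ) : ℂ) else 0)
          + (if Fin.last d = k then ((c (Fin.last d) : ℝ) : ℂ) else 0) := by
      intro k
      simp only [Pm, Matrix.add_mulVec, Pi.add_apply, sbm_mulVec, one_mul, toCv]
    have hAv : ∀ k, ((Am d).mulVec (toCv d c)) k
        = (if (0 : Fin (d+1)) = k then ((c (Fin.last d) : ℝ) : ℂ) else 0)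
          - (if Fin.last d = k then ((c 0 : ℝ) : ℂ) else 0) := by
      intro k
      simp only [Am, Matrix.sub_mulVec, Pi.sub_apply, sbm_mulVec, one_mul, toCv]
    funext μ
    rw [Matrix.add_mulVec, Matrix.add_mulVec, Matrix.one_mulVec,
      Matrix.smul_mulVec, Matrix.smul_mulVec]
    rw [Pi.add_apply, Pi.add_apply, Pi.smul_apply, Pi.smul_apply, smul_eq_mul, smul_eq_mul,
      hPv, hAv]
    rcases eq_or_ne μ 0 with rfl | hμ0
    · rw [hz0]
      simp only [toCv]
      simp [h0.symm, hc0, hcl]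
      rw [← hsinh]
      push_cast
      ring
    · rcases eq_or_ne μ (Fin.last d) with rfl | hμl
      · rw [hzne _ (Ne.symm h0)]
        simp only [toCv]
        simp [h0, hc0, hcl]
        rw [← hcosh]
        push_cast
        ring
      · rw [hzne μ hμ0]
        simp only [toCv]
        simp [Ne.symm hμ0, Ne.symm hμl, hcmid μ hμ0 hμl]
  have him : (Complex.I * (t:ℂ)).im = t := by simp
  refine ⟨?_, ?_, ?_⟩
  · intro hy0
    refine ⟨c, hcmem, ?_⟩
    have hrl : r = xv (Fin.last d) := by
      rw [hr_def, hy0]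
      simp [Real.sqrt_mul_self hxd.le]
    funext μ
    rw [hz]
    rcases eq_or_ne μ 0 with rfl | hμ0
    · rw [if_pos rfl]
      simp [toCv, hc0, hy0]
    · rw [if_neg hμ0]
      rcases eq_or_ne μ (Fin.last d) with rfl | hμl
      · simp [toCv, hcl, hrl]
      · simp [toCv, hcmid μ hμ0 hμl]
  · intro hy0
    have htpos : 0 < t := by
      rw [ht_def, ← Real.arsinh_zero]
      exact (Real.arsinh_lt_arsinh).2 (div_pos hy0 hrpos)
    exact ⟨M0d d, M0d_mem_C1 h0, c, hcmem, Complex.I * (t:ℂ), by rw [him]; exact htpos, hmain⟩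
  · intro hy0
    have htneg : t < 0 := by
      rw [ht_def, ← Real.arsinh_zero]
      exact (Real.arsinh_lt_arsinh).2 (div_neg_of_neg_of_pos hy0 hrpos)
    exact ⟨M0d d, M0d_mem_C1 h0, c, hcmem, Complex.I * (t:ℂ), by rw [him]; exact htneg, hmain⟩

end AdS
end
end

section
/- If z = x + iy ∈ A₁, then the complex numbers z⁰ = x⁰ + iy⁰ and z^d = x^d + iy^d are both nonzero, and Im(z⁰/z^d) > 0. -/
noncomputable section
open Matrix Complex

namespace AdS

/-- The set A₁ = {x+iy : ⟨x,x⟩−⟨y,y⟩ = 1, ⟨x,y⟩ = 0, ⟨y,y⟩ > 0, y⁰x^d − x⁰y^d > 0}. -/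
def A1 (d : ℕ) : Set (Fin (d+1) → ℂ) :=
  {z | formR d (fun μ => (z μ).re) (fun μ => (z μ).re)
        - formR d (fun μ => (z μ).im) (fun μ => (z μ).im) = 1 ∧
      formR d (fun μ => (z μ).re) (fun μ => (z μ).im) = 0 ∧
      0 < formR d (fun μ => (z μ).im) (fun μ => (z μ).im) ∧
      0 < (z 0).im * (z (Fin.last d)).re - (z 0).re * (z (Fin.last d)).im}

/-- for `z ∈ A₁`, the coordinates `z⁰` and `z^d` are nonzero and
`Im(z⁰/z^d) > 0`. -/
theorem A1_coordinates (d : ℕ) (hd : 2 ≤ d) (z : Fin (d+1) → ℂ) (hz : z ∈ A1 d) :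
    z 0 ≠ 0 ∧ z (Fin.last d) ≠ 0 ∧ 0 < (z 0 / z (Fin.last d)).im := by
  obtain ⟨-, -, -, h4⟩ := hz
  have hzd : z (Fin.last d) ≠ 0 := by
    intro h; rw [h] at h4; simp at h4
  have hz0 : z 0 ≠ 0 := by
    intro h; rw [h] at h4; simp at h4
  refine ⟨hz0, hzd, ?_⟩
  have hns : 0 < Complex.normSq (z (Fin.last d)) := Complex.normSq_pos.mpr hzd
  have : (z 0 / z (Fin.last d)).im
      = ((z 0).im * (z (Fin.last d)).re - (z 0).re * (z (Fin.last d)).im)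
        / Complex.normSq (z (Fin.last d)) := by
    rw [Complex.div_im]; ring
  rw [this]
  exact div_pos h4 hns

end AdS
end
end

section
/- The image of A₁ under the coordinate map z ↦ z^d is exactly the cut-plane ℂ ∖ [−1,1], where [−1,1] denotes the real segment {t ∈ ℝ : −1 ≤ t ≤ 1} regarded as a subset of ℂ. -/
noncomputable section
open Matrix Complex

namespace AdS

/-- Sum of the "middle" (spacelike) coordinate products. -/
def Smid (d : ℕ) (f g : Fin (d+1) → ℝ) : ℝ :=
  ∑ μ, (if μ = 0 ∨ μ = Fin.last d then 0 else f μ * g μ)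

lemma zero_ne_last (d : ℕ) (hd : d ≠ 0) : (0 : Fin (d+1)) ≠ Fin.last d := by
  simp [Fin.ext_iff, Fin.last]
  omega

lemma formR_eq (d : ℕ) (hd : d ≠ 0) (f g : Fin (d+1) → ℝ) :
    formR d f g = f 0 * g 0 + f (Fin.last d) * g (Fin.last d) - Smid d f g := by
  have h1 : formR d f g
      = (∑ μ, (if μ = 0 ∨ μ = Fin.last d then f μ * g μ else 0)) - Smid d f g := by
    rw [Smid, ← Finset.sum_sub_distrib, formR]
    apply Finset.sum_congr rfl
    intro μ _
    by_cases h : μ = 0 ∨ μ = Fin.last d <;> simp [eta, h]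
  rw [h1]
  congr 1
  rw [← Finset.sum_subset (Finset.subset_univ ({0, Fin.last d} : Finset (Fin (d+1))))]
  · rw [Finset.sum_pair (zero_ne_last d hd)]
    simp
  · intro x _ hx
    simp only [Finset.mem_insert, Finset.mem_singleton] at hx
    have : ¬(x = 0 ∨ x = Fin.last d) := by tauto
    simp [this]

lemma Smid_nonneg (d : ℕ) (f : Fin (d+1) → ℝ) : 0 ≤ Smid d f f :=
  Finset.sum_nonneg fun μ _ => by
    by_cases h : μ = 0 ∨ μ = Fin.last d <;> simp [h]; exact mul_self_nonneg _

lemma Smid_cauchy (d : ℕ) (f g : Fin (d+1) → ℝ) :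
    (Smid d f g)^2 ≤ Smid d f f * Smid d g g := by
  have := Finset.sum_mul_sq_le_sq_mul_sq Finset.univ
    (fun μ => if μ = 0 ∨ μ = Fin.last d then 0 else f μ)
    (fun μ => if μ = 0 ∨ μ = Fin.last d then 0 else g μ)
  convert this using 2
  case e'_2 => rfl
  all_goals
  · apply Finset.sum_congr rfl; intro μ _;
    by_cases h : μ = 0 ∨ μ = Fin.last d <;> simp [h] <;> ring

lemma Smid_eq_zero (d : ℕ) (f g : Fin (d+1) → ℝ)
    (hf : ∀ μ, μ ≠ 0 → μ ≠ Fin.last d → f μ = 0) : Smid d f g = 0 :=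
  Finset.sum_eq_zero fun μ _ => by
    by_cases h : μ = 0 ∨ μ = Fin.last d
    · simp [h]
    · push_neg at h
      simp [hf μ h.1 h.2]

lemma mink (d : ℕ) (x y : Fin (d+1) → ℝ)
    (hxy : x 0 * y 0 = Smid d x y) (hy : Smid d y y < y 0 ^ 2) :
    x 0 ^ 2 ≤ Smid d x x := by
  have h1 := Smid_cauchy d x y
  have h2 := Smid_nonneg d x
  have h3 := Smid_nonneg d y
  have hy0 : 0 < y 0 ^ 2 := lt_of_le_of_lt h3 hy
  have key : x 0 ^ 2 * y 0 ^ 2 ≤ Smid d x x * y 0 ^ 2 := by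
    have hsq : x 0 ^ 2 * y 0 ^ 2 = Smid d x y ^ 2 := by rw [← mul_pow, hxy]
    have h4 : Smid d x x * Smid d y y ≤ Smid d x x * y 0 ^ 2 :=
      mul_le_mul_of_nonneg_left hy.le h2
    linarith
  exact (mul_le_mul_iff_of_pos_right hy0).mp key

set_option maxHeartbeats 1000000 in
/-- the image of `A₁` under `z ↦ z^d` is the cut-plane `ℂ ∖ [−1,1]`. -/
theorem A1_last_coordinate_image (d : ℕ) (hd : 2 ≤ d) :
    (fun z : Fin (d+1) → ℂ => z (Fin.last d)) '' A1 d
      = ((fun t : ℝ => (t : ℂ)) '' Set.Icc (-1 : ℝ) 1)ᶜ := by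
  have hd0 : d ≠ 0 := by omega
  have h0l : (0 : Fin (d+1)) ≠ Fin.last d := zero_ne_last d hd0
  ext w
  simp only [Set.mem_image, Set.mem_compl_iff, Set.mem_Icc]
  constructor
  · rintro ⟨z, hz, rfl⟩
    rintro ⟨t, ht, hteq⟩
    obtain ⟨c1, c2, c3, c4⟩ := hz
    set x : Fin (d+1) → ℝ := fun μ => (z μ).re with hx
    set y : Fin (d+1) → ℝ := fun μ => (z μ).im with hy
    have hxl : x (Fin.last d) = t := by
      simp only [hx]
      rw [← hteq]; simp
    have hyl : y (Fin.last d) = 0 := by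
      simp only [hy]
      rw [← hteq]; simp
    rw [formR_eq d hd0, formR_eq d hd0] at c1
    rw [formR_eq d hd0] at c2
    rw [formR_eq d hd0] at c3
    rw [hxl] at c1 c2
    rw [hyl] at c1 c2 c3
    have hc4 : 0 < y 0 * t := by
      have : (z 0).im * (z (Fin.last d)).re - (z 0).re * (z (Fin.last d)).im
          = y 0 * t - x 0 * 0 := by
        simp only [hx, hy]
        rw [← hteq]; simp
      rw [this] at c4
      linarith
    have hmk : x 0 ^ 2 ≤ Smid d x x := by
      apply mink d x y
      · linarith
      · nlinarith
    nlinarith [ht.1, ht.2, c1, c3, hmk]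
  · intro hw
    have hnI : ¬(w.im = 0 ∧ -1 ≤ w.re ∧ w.re ≤ 1) := by
      rintro ⟨hb, h1, h2⟩
      exact hw ⟨w.re, ⟨h1, h2⟩, Complex.ext (by simp) (by simp [hb])⟩
    obtain ⟨s, hs⟩ : ∃ s : ℂ, s ^ 2 = 1 - w ^ 2 :=
      IsAlgClosed.exists_pow_nat_eq (1 - w ^ 2) (n := 2) (by norm_num)
    have e1 : s.re ^ 2 - s.im ^ 2 = 1 - (w.re ^ 2 - w.im ^ 2) := by
      have := congrArg Complex.re hs
      simp only [pow_two, Complex.mul_re, Complex.sub_re, Complex.one_re,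
        Complex.sub_im, Complex.one_im] at this ⊢
      linarith
    have e2 : s.re * s.im = -(w.re * w.im) := by
      have := congrArg Complex.im hs
      simp only [pow_two, Complex.mul_im, Complex.sub_im, Complex.one_im,
        Complex.sub_re, Complex.one_re] at this
      linarith
    have hD : s.im * w.re - s.re * w.im ≠ 0 := by
      intro h0
      apply hnI
      rcases eq_or_ne w.im 0 with hb | hb
      · refine ⟨hb, ?_, ?_⟩ <;>
        · rw [hb] at h0 e1 e2
          rcases mul_eq_zero.mp (by linarith : s.im * w.re = 0) with hq | ha
          · nlinarith [sq_nonneg s.re]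
          · nlinarith
      · exfalso
        have key : w.re * (s.im ^ 2 + w.im ^ 2) = 0 := by linear_combination s.im * h0 + w.im * e2
        rcases mul_eq_zero.mp key with ha | hq
        · rw [ha] at h0 e1
          have hp : s.re = 0 := by
            rcases mul_eq_zero.mp (by linarith : s.re * w.im = 0) with h | h
            · exact h
            · exact absurd h hb
          nlinarith [sq_nonneg w.im, sq_nonneg s.im]
        · have : 0 < w.im ^ 2 := by positivity
          nlinarith [sq_nonneg s.im]
    obtain ⟨z0, hz0sq, hz0pos⟩ :
        ∃ z0 : ℂ, z0 ^ 2 = 1 - w ^ 2 ∧ 0 < z0.im * w.re - z0.re * w.im := by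
      rcases hD.lt_or_gt with h | h
      · exact ⟨-s, by rw [neg_pow]; simp [hs],
          by simp only [Complex.neg_re, Complex.neg_im]; linarith⟩
      · exact ⟨s, hs, h⟩
    have f1 : z0.re ^ 2 - z0.im ^ 2 = 1 - (w.re ^ 2 - w.im ^ 2) := by
      have := congrArg Complex.re hz0sq
      simp only [pow_two, Complex.mul_re, Complex.sub_re, Complex.one_re,
        Complex.sub_im, Complex.one_im] at this ⊢
      linarith
    have f2 : z0.re * z0.im = -(w.re * w.im) := by
      have := congrArg Complex.im hz0sq
      simp only [pow_two, Complex.mul_im, Complex.sub_im, Complex.one_im,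
        Complex.sub_re, Complex.one_re] at this
      linarith
    refine ⟨fun μ => if μ = 0 then z0 else if μ = Fin.last d then w else 0, ?_, ?_⟩
    · set z : Fin (d+1) → ℂ :=
        fun μ => if μ = 0 then z0 else if μ = Fin.last d then w else 0 with hzdef
      simp only [A1, Set.mem_setOf_eq]
      set x : Fin (d+1) → ℝ := fun μ => (z μ).re with hx
      set y : Fin (d+1) → ℝ := fun μ => (z μ).im with hy
      have hz0 : z 0 = z0 := by simp [hzdef]
      have hzl : z (Fin.last d) = w := by simp [hzdef, h0l.symm]
      have hx0 : x 0 = z0.re := by simp [hx, hz0]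
      have hy0 : y 0 = z0.im := by simp [hy, hz0]
      have hxl : x (Fin.last d) = w.re := by simp [hx, hzl]
      have hyl : y (Fin.last d) = w.im := by simp [hy, hzl]
      have hxz : ∀ μ, μ ≠ 0 → μ ≠ Fin.last d → x μ = 0 := by
        intro μ h1 h2; simp [hx, hzdef, h1, h2]
      have hyz : ∀ μ, μ ≠ 0 → μ ≠ Fin.last d → y μ = 0 := by
        intro μ h1 h2; simp [hy, hzdef, h1, h2]
      have hyim : 0 < z0.im ^ 2 + w.im ^ 2 := by
        rcases eq_or_ne z0.im 0 with h1 | h1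
        · rcases eq_or_ne w.im 0 with h2 | h2
          · rw [h1, h2] at hz0pos; simp at hz0pos
          · positivity
        · positivity
      refine ⟨?_, ?_, ?_, ?_⟩
      · rw [formR_eq d hd0, formR_eq d hd0, Smid_eq_zero d x x hxz,
          Smid_eq_zero d y y hyz, hx0, hy0, hxl, hyl]
        nlinarith [f1]
      · rw [formR_eq d hd0, Smid_eq_zero d x y hxz, hx0, hy0, hxl, hyl]
        nlinarith [f2]
      · rw [formR_eq d hd0, Smid_eq_zero d y y hyz, hy0, hyl]
        nlinarith [hyim]
      · rw [hz0, hzl]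
        exact hz0pos
    · simp [h0l.symm]


end AdS
end
end
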